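/- Fix A ∈ ℝ^{n×m} and let k = min_{x ∈ MinMaxStrats(A)} |BR(x)|. For every ε > 0 there exists M > 0 such that for all η > 0 and T > 0 with η·T ≥ M, the optimal continuous-time reward with zero initial history satisfies R*_cont(0, T) ≥ T·Val(A) + ( ln(m) − ln(k) − ε )/η. -/

import Mathlib

open MeasureTheory

/-- Componentwise cumulative play of a continuous-time strategy: `∫_0^t x(s) ds`. -/
noncomputable def cumX {n : ℕ} (x : ℝ → Fin n → ℝ) (t : ℝ) (k : Fin n) : ℝ :=
  ∫ s in (0:ℝ)..t, x s k

/-- The Replicator Dynamics learner's mixed strategy at time `t`. -/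
noncomputable def contPlay {n m : ℕ} (η : ℝ) (A : Matrix (Fin n) (Fin m) ℝ)
    (h0 : Fin m → ℝ) (x : ℝ → Fin n → ℝ) (t : ℝ) (i : Fin m) : ℝ :=
  Real.exp (η * (h0 i - ∑ k, cumX x t k * A k i)) /
    ∑ j, Real.exp (η * (h0 j - ∑ k, cumX x t k * A k j))

/-- The optimizer's continuous-time reward against the Replicator Dynamics. -/
noncomputable def Rcont {n m : ℕ} (η : ℝ) (A : Matrix (Fin n) (Fin m) ℝ)
    (h0 : Fin m → ℝ) (T : ℝ) (x : ℝ → Fin n → ℝ) : ℝ :=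
  ∫ t in (0:ℝ)..T, ∑ k, ∑ i, x t k * A k i * contPlay η A h0 x t i

/-- The optimal continuous-time reward. -/
noncomputable def RcontStar {n m : ℕ} (η : ℝ) (A : Matrix (Fin n) (Fin m) ℝ)
    (h0 : Fin m → ℝ) (T : ℝ) : ℝ :=
  sSup {r | ∃ x : ℝ → Fin n → ℝ, Measurable x ∧
    (∀ t ∈ Set.Icc (0:ℝ) T, x t ∈ stdSimplex ℝ (Fin n)) ∧ r = Rcont η A h0 T x}

/-- The value of the zero-sum game: `Val(A) = max_{x ∈ Δ_n} min_j xᵀ A e_j`. -/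
noncomputable def gameValue {n m : ℕ} (A : Matrix (Fin n) (Fin m) ℝ) : ℝ :=
  sSup {v | ∃ x ∈ stdSimplex ℝ (Fin n), v = ⨅ j, ∑ k, x k * A k j}

open scoped Classical in
/-- The set of best responses of the learner to the optimizer's mixed strategy `x`. -/
noncomputable def BRset {n m : ℕ} (A : Matrix (Fin n) (Fin m) ℝ) (x : Fin n → ℝ) :
    Finset (Fin m) :=
  Finset.univ.filter fun j => ∀ i, ∑ k, x k * A k j ≤ ∑ k, x k * A k i

/-- `k = min_{x ∈ MinMaxStrats(A)} |BR(x)|`: the least number of best responses of a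
minmax strategy of the optimizer. -/
noncomputable def minBRcard {n m : ℕ} (A : Matrix (Fin n) (Fin m) ℝ) : ℕ :=
  sInf {c : ℕ | ∃ x ∈ stdSimplex ℝ (Fin n),
    (⨅ j, ∑ k, x k * A k j) = gameValue A ∧ c = (BRset A x).card}

section Aux

variable {n m : ℕ}

/-- Continuity of `x ↦ ⨅ j, xᵀ A e_j`. -/
lemma aux_cont (hm : 0 < m) (A : Matrix (Fin n) (Fin m) ℝ) :
    Continuous fun x : Fin n → ℝ => ⨅ j, ∑ k, x k * A k j := by
  have : Nonempty (Fin m) := ⟨⟨0, hm⟩⟩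
  have h : (fun x : Fin n → ℝ => ⨅ j, ∑ k, x k * A k j)
      = fun x => Finset.univ.inf' Finset.univ_nonempty (fun j => ∑ k, x k * A k j) := by
    funext x
    rw [Finset.inf'_univ_eq_ciInf]
  rw [h]
  apply Continuous.finset_inf'_apply (f := fun (j : Fin m) (x : Fin n → ℝ) => ∑ k, x k * A k j)
    Finset.univ_nonempty
  intro j _
  exact continuous_finset_sum _ fun k _ => (continuous_apply k).mul continuous_const

set_option maxHeartbeats 1000000 in
/-- Existence of a minmax strategy. -/
lemma aux_minmax (hn : 0 < n) (hm : 0 < m) (A : Matrix (Fin n) (Fin m) ℝ) :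
    ∃ x ∈ stdSimplex ℝ (Fin n), (⨅ j, ∑ k, x k * A k j) = gameValue A := by
  set f : (Fin n → ℝ) → ℝ := fun x => ⨅ j, ∑ k, x k * A k j with hf
  have hset : {v | ∃ x ∈ stdSimplex ℝ (Fin n), v = ⨅ j, ∑ k, x k * A k j}
      = f '' stdSimplex ℝ (Fin n) := by
    ext v
    simp only [Set.mem_setOf_eq, Set.mem_image, hf]
    constructor
    · rintro ⟨x, hx, rfl⟩; exact ⟨x, hx, rfl⟩
    · rintro ⟨x, hx, rfl⟩; exact ⟨x, hx, rfl⟩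
  have hcpt : IsCompact (f '' stdSimplex ℝ (Fin n)) :=
    (isCompact_stdSimplex ℝ (Fin n)).image (aux_cont hm A)
  have hne : (f '' stdSimplex ℝ (Fin n)).Nonempty :=
    Set.Nonempty.image f ⟨Pi.single ⟨0, hn⟩ 1, single_mem_stdSimplex (𝕜 := ℝ) (⟨0, hn⟩ : Fin n)⟩
  have hmem : sSup (f '' stdSimplex ℝ (Fin n)) ∈ f '' stdSimplex ℝ (Fin n) :=
    hcpt.sSup_mem hne
  obtain ⟨x, hx, hfx⟩ := hmem
  refine ⟨x, hx, ?_⟩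
  rw [gameValue, hset]
  exact hfx

lemma aux_minBR (hn : 0 < n) (hm : 0 < m) (A : Matrix (Fin n) (Fin m) ℝ) :
    ∃ x ∈ stdSimplex ℝ (Fin n),
      (⨅ j, ∑ k, x k * A k j) = gameValue A ∧ minBRcard A = (BRset A x).card := by
  obtain ⟨x, hx, hvx⟩ := aux_minmax hn hm A
  have hne : {c : ℕ | ∃ x ∈ stdSimplex ℝ (Fin n),
      (⨅ j, ∑ k, x k * A k j) = gameValue A ∧ c = (BRset A x).card}.Nonempty :=
    ⟨(BRset A x).card, x, hx, hvx, rfl⟩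
  have := Nat.sInf_mem hne
  obtain ⟨y, hy, hvy, hcy⟩ := this
  exact ⟨y, hy, hvy, hcy⟩

end Aux

lemma contPlay_nonneg {n m : ℕ} (hm : 0 < m) (η : ℝ) (A : Matrix (Fin n) (Fin m) ℝ)
    (h0 : Fin m → ℝ) (x : ℝ → Fin n → ℝ) (t : ℝ) (i : Fin m) :
    0 ≤ contPlay η A h0 x t i := by
  unfold contPlay
  have hpos : 0 < ∑ j, Real.exp (η * (h0 j - ∑ k, cumX x t k * A k j)) :=
    Finset.sum_pos (fun j _ => Real.exp_pos _) ⟨i, Finset.mem_univ i⟩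
  positivity

lemma contPlay_le_one {n m : ℕ} (η : ℝ) (A : Matrix (Fin n) (Fin m) ℝ)
    (h0 : Fin m → ℝ) (x : ℝ → Fin n → ℝ) (t : ℝ) (i : Fin m) :
    contPlay η A h0 x t i ≤ 1 := by
  unfold contPlay
  have hpos : 0 < ∑ j, Real.exp (η * (h0 j - ∑ k, cumX x t k * A k j)) :=
    Finset.sum_pos (fun j _ => Real.exp_pos _) ⟨i, Finset.mem_univ i⟩
  rw [div_le_one hpos]
  exact Finset.single_le_sum (f := fun j => Real.exp (η * (h0 j - ∑ k, cumX x t k * A k j)))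
    (fun j _ => (Real.exp_pos _).le) (Finset.mem_univ i)

lemma aux_le_star {n m : ℕ} (hm : 0 < m) (A : Matrix (Fin n) (Fin m) ℝ)
    {x0 : Fin n → ℝ} (hx0 : x0 ∈ stdSimplex ℝ (Fin n)) (η : ℝ) {T : ℝ} (hT : 0 < T) :
    Rcont η A (fun _ => 0) T (fun _ => x0) ≤ RcontStar η A (fun _ => 0) T := by
  have hbdd : ∀ y : ℝ → Fin n → ℝ, (∀ t ∈ Set.Icc (0:ℝ) T, y t ∈ stdSimplex ℝ (Fin n)) →
      Rcont η A (fun _ => 0) T y ≤ (∑ k, ∑ i, |A k i|) * T := by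
    intro y hy
    have hbound : ∀ t ∈ Set.uIoc (0:ℝ) T,
        ‖∑ k, ∑ i, y t k * A k i * contPlay η A (fun _ => 0) y t i‖
          ≤ ∑ k, ∑ i, |A k i| := by
      intro t ht
      rw [Set.uIoc_of_le hT.le] at ht
      have hty : y t ∈ stdSimplex ℝ (Fin n) := hy t ⟨ht.1.le, ht.2⟩
      rw [Real.norm_eq_abs]
      calc |∑ k, ∑ i, y t k * A k i * contPlay η A (fun _ => 0) y t i|
          ≤ ∑ k, |∑ i, y t k * A k i * contPlay η A (fun _ => 0) y t i| :=
            Finset.abs_sum_le_sum_abs _ _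
        _ ≤ ∑ k, ∑ i, |y t k * A k i * contPlay η A (fun _ => 0) y t i| :=
            Finset.sum_le_sum fun k _ => Finset.abs_sum_le_sum_abs _ _
        _ ≤ ∑ k, ∑ i, |A k i| := by
            refine Finset.sum_le_sum fun k _ => Finset.sum_le_sum fun i _ => ?_
            have hyk0 : 0 ≤ y t k := hty.1 k
            have hyk1 : y t k ≤ 1 := by
              have := Finset.single_le_sum (f := fun k => y t k)
                (fun j _ => hty.1 j) (Finset.mem_univ k)
              rw [hty.2] at this
              exact this
            have hc0 := contPlay_nonneg hm η A (fun _ => 0) y t i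
            have hc1 := contPlay_le_one η A (fun _ => 0) y t i
            rw [abs_mul, abs_mul, abs_of_nonneg hyk0, abs_of_nonneg hc0]
            calc y t k * |A k i| * contPlay η A (fun _ => 0) y t i
                ≤ 1 * |A k i| * 1 := by
                  apply mul_le_mul (mul_le_mul hyk1 le_rfl (abs_nonneg _) zero_le_one) hc1 hc0
                  positivity
              _ = |A k i| := by ring
    have hnorm := intervalIntegral.norm_integral_le_of_norm_le_const hbound
    calc Rcont η A (fun _ => 0) T y ≤ |Rcont η A (fun _ => 0) T y| := le_abs_self _
      _ ≤ (∑ k, ∑ i, |A k i|) * |T - 0| := hnorm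
      _ = (∑ k, ∑ i, |A k i|) * T := by rw [sub_zero, abs_of_pos hT]
  apply le_csSup
  · refine ⟨(∑ k, ∑ i, |A k i|) * T, ?_⟩
    rintro r ⟨y, hym, hys, rfl⟩
    exact hbdd y hys
  · exact ⟨fun _ => x0, measurable_const, fun t _ => hx0, rfl⟩

lemma aux_reward {n m : ℕ} (hm : 0 < m) (A : Matrix (Fin n) (Fin m) ℝ) (x0 : Fin n → ℝ)
    {η : ℝ} (hη : 0 < η) (T : ℝ) :
    Rcont η A (fun _ => 0) T (fun _ => x0)
      = η⁻¹ * (Real.log m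
          - Real.log (∑ j, Real.exp (-(η * T * (∑ k, x0 k * A k j))))) := by
  have : Nonempty (Fin m) := ⟨⟨0, hm⟩⟩
  set v : Fin m → ℝ := fun j => ∑ k, x0 k * A k j with hv
  set S : ℝ → ℝ := fun t => ∑ j, Real.exp (-(η * t * v j)) with hSdef
  have hS : ∀ t, 0 < S t :=
    fun t => Finset.sum_pos (fun j _ => Real.exp_pos _) Finset.univ_nonempty
  have hcum : ∀ (t : ℝ) (k : Fin n), cumX (fun _ => x0) t k = t * x0 k := by
    intro t k; unfold cumX; rw [intervalIntegral.integral_const]; simp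
  have hsum : ∀ (t : ℝ) (j : Fin m), (∑ k, (t * x0 k) * A k j) = t * v j := by
    intro t j
    rw [hv, Finset.mul_sum]
    exact Finset.sum_congr rfl fun k _ => by ring
  have hplay : ∀ (t : ℝ) (i : Fin m), contPlay η A (fun _ => 0) (fun _ => x0) t i
      = Real.exp (-(η * t * v i)) / S t := by
    intro t i
    unfold contPlay
    simp only [hcum, hsum, hSdef]
    have harg : ∀ j : Fin m, η * (0 - t * v j) = -(η * t * v j) := fun j => by ring
    simp only [harg]
  set g : ℝ → ℝ := fun t => ∑ i, v i * (Real.exp (-(η * t * v i)) / S t) with hgdef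
  have hg : ∀ t : ℝ, (∑ k, ∑ i, (fun _ : ℝ => x0) t k * A k i
      * contPlay η A (fun _ => 0) (fun _ => x0) t i) = g t := by
    intro t
    simp only [hplay, hgdef]
    rw [Finset.sum_comm]
    refine Finset.sum_congr rfl fun i _ => ?_
    rw [← Finset.sum_mul, hv]
  have hSder : ∀ t : ℝ, HasDerivAt S (∑ j, (-(η * v j)) * Real.exp (-(η * t * v j))) t := by
    intro t
    refine HasDerivAt.fun_sum fun j _ => ?_
    have h0 : (fun t : ℝ => -(η * t * v j)) = fun t : ℝ => t * (-(η * v j)) := by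
      funext s; ring
    have h1 : HasDerivAt (fun t : ℝ => -(η * t * v j)) (-(η * v j)) t := by
      rw [h0]; exact hasDerivAt_mul_const _
    simpa [mul_comm] using h1.exp
  have hF : ∀ t : ℝ, HasDerivAt (fun t : ℝ => -(η⁻¹ * Real.log (S t))) (g t) t := by
    intro t
    have hlog := ((hSder t).log (hS t).ne')
    have h2 := (hlog.const_mul η⁻¹).fun_neg
    refine h2.congr_deriv ?_
    have hW : g t = (∑ i, v i * Real.exp (-(η * t * v i))) / S t := by
      rw [hgdef, Finset.sum_div]
      exact Finset.sum_congr rfl fun i _ => (mul_div_assoc _ _ _).symm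
    have hnum : (∑ j, -(η * v j) * Real.exp (-(η * t * v j)))
        = (-η) * ∑ i, v i * Real.exp (-(η * t * v i)) := by
      rw [Finset.mul_sum]
      exact Finset.sum_congr rfl fun i _ => by ring
    rw [hW, hnum]
    field_simp
    ring_nf
    exact (mul_comm _ _).trans (congrArg _ (Finset.sum_congr rfl fun i _ => by ring_nf))
  have hScont : Continuous S := by
    rw [hSdef]
    refine continuous_finset_sum _ fun j _ => Real.continuous_exp.comp ?_
    exact ((continuous_const.mul continuous_id).mul continuous_const).neg
  have hgcont : Continuous g := by
    rw [hgdef]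
    refine continuous_finset_sum _ fun i _ => continuous_const.mul ?_
    refine Continuous.div (Real.continuous_exp.comp ?_) hScont fun t => (hS t).ne'
    exact ((continuous_const.mul continuous_id).mul continuous_const).neg
  have hint : Rcont η A (fun _ => 0) T (fun _ => x0) = ∫ t in (0:ℝ)..T, g t := by
    unfold Rcont
    exact intervalIntegral.integral_congr fun t _ => hg t
  rw [hint, intervalIntegral.integral_eq_sub_of_hasDerivAt (fun t _ => hF t)
    (hgcont.intervalIntegrable 0 T)]
  have hS0 : S 0 = m := by
    rw [hSdef]
    simp
  rw [hS0]
  ring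

/-- for every `ε > 0` there is `M > 0` such that whenever `η·T ≥ M`,
`R*_cont(0,T) ≥ T·Val(A) + (ln m − ln k − ε)/η`. -/
theorem stmt4 {n m : ℕ} (hn : 0 < n) (hm : 0 < m) (A : Matrix (Fin n) (Fin m) ℝ) :
    ∀ ε : ℝ, 0 < ε → ∃ M : ℝ, 0 < M ∧ ∀ η T : ℝ, 0 < η → 0 < T → M ≤ η * T →
      T * gameValue A + (Real.log m - Real.log (minBRcard A) - ε) / η
        ≤ RcontStar η A (fun _ => 0) T := by
  intro ε hε
  have hFinm : Nonempty (Fin m) := ⟨⟨0, hm⟩⟩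
  obtain ⟨xs, hxs, hvxs, hkcard⟩ := aux_minBR hn hm A
  have hVal_le : ∀ j, gameValue A ≤ ∑ k, xs k * A k j := by
    intro j
    rw [← hvxs]
    exact ciInf_le (Finite.bddBelow_range _) j
  have hBRmem : ∀ j, j ∈ BRset A xs ↔ ∀ i, (∑ k, xs k * A k j) ≤ ∑ k, xs k * A k i := by
    intro j
    simp [BRset]
  have hBRne : (BRset A xs).Nonempty := by
    obtain ⟨j, -, hj⟩ := Finset.exists_min_image Finset.univ
      (fun j => ∑ k, xs k * A k j) ⟨⟨0, hm⟩, Finset.mem_univ _⟩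
    exact ⟨j, (hBRmem j).mpr fun i => hj i (Finset.mem_univ i)⟩
  have hBRval : ∀ j ∈ BRset A xs, (∑ k, xs k * A k j) = gameValue A := by
    intro j hj
    refine le_antisymm ?_ (hVal_le j)
    rw [← hvxs]
    exact le_ciInf fun i => (hBRmem j).mp hj i
  have hK1 : 1 ≤ (BRset A xs).card := Finset.card_pos.mpr hBRne
  obtain ⟨δ, hδ, hgap⟩ : ∃ δ : ℝ, 0 < δ ∧ ∀ j, j ∉ BRset A xs →
      gameValue A + δ ≤ ∑ k, xs k * A k j := by
    by_cases hBc : ((BRset A xs)ᶜ : Finset (Fin m)).Nonempty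
    · refine ⟨(BRset A xs)ᶜ.inf' hBc (fun j => ∑ k, xs k * A k j) - gameValue A, ?_, ?_⟩
      · obtain ⟨j0, hj0mem, hj0⟩ := Finset.exists_mem_eq_inf' hBc
          (fun j => ∑ k, xs k * A k j)
        rw [hj0]
        have hnotin : j0 ∉ BRset A xs := Finset.mem_compl.mp hj0mem
        have hne' : ¬ ∀ i, (∑ k, xs k * A k j0) ≤ ∑ k, xs k * A k i := fun h =>
          hnotin ((hBRmem j0).mpr h)
        push_neg at hne'
        obtain ⟨i, hi⟩ := hne'
        have := hVal_le i
        linarith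
      · intro j hj
        have := Finset.inf'_le (fun j => ∑ k, xs k * A k j) (Finset.mem_compl.mpr hj)
        linarith
    · exact ⟨1, one_pos, fun j hj => absurd ⟨j, Finset.mem_compl.mpr hj⟩ hBc⟩
  refine ⟨max 1 ((Real.log (↑m / (Real.exp ε - 1)) + 1) / δ),
    lt_of_lt_of_le one_pos (le_max_left _ _), ?_⟩
  intro η T hη hT hM
  have hR := aux_reward hm A xs hη T
  have hle := aux_le_star hm A hxs η hT
  set c : ℝ := η * T with hc
  have hcpos : 0 < c := mul_pos hη hT
  set W : ℝ := ∑ j, Real.exp (-(c * (∑ k, xs k * A k j))) with hWdef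
  have hWpos : 0 < W :=
    Finset.sum_pos (fun j _ => Real.exp_pos _) Finset.univ_nonempty
  have hexp1 : 1 < Real.exp ε := by
    have := Real.exp_lt_exp.mpr hε
    rwa [Real.exp_zero] at this
  have hMδ : Real.log (↑m / (Real.exp ε - 1)) ≤ c * δ := by
    have h1 : (Real.log (↑m / (Real.exp ε - 1)) + 1) / δ ≤ c :=
      le_trans (le_max_right _ _) hM
    have h2 := mul_le_mul_of_nonneg_right h1 hδ.le
    rw [div_mul_cancel₀ _ hδ.ne'] at h2
    linarith
  have hmpos : (0:ℝ) < m := Nat.cast_pos.mpr hm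
  have hexpc : Real.exp (-(c * δ)) ≤ (Real.exp ε - 1) / ↑m := by
    have hqpos : (0:ℝ) < ↑m / (Real.exp ε - 1) := by
      apply div_pos hmpos; linarith
    calc Real.exp (-(c * δ)) ≤ Real.exp (-(Real.log (↑m / (Real.exp ε - 1)))) :=
          Real.exp_le_exp.mpr (by linarith)
      _ = (Real.exp ε - 1) / ↑m := by
          rw [← Real.log_inv, Real.exp_log (by positivity), inv_div]
  have hsplit : W = (∑ j ∈ BRset A xs, Real.exp (-(c * (∑ k, xs k * A k j))))
      + ∑ j ∈ (BRset A xs)ᶜ, Real.exp (-(c * (∑ k, xs k * A k j))) :=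
    (Finset.sum_add_sum_compl _ _).symm
  have h1 : (∑ j ∈ BRset A xs, Real.exp (-(c * (∑ k, xs k * A k j))))
      = ((BRset A xs).card : ℝ) * Real.exp (-(c * gameValue A)) := by
    rw [Finset.sum_congr rfl fun j hj => by rw [hBRval j hj]]
    rw [Finset.sum_const, nsmul_eq_mul]
  have h2 : (∑ j ∈ (BRset A xs)ᶜ, Real.exp (-(c * (∑ k, xs k * A k j))))
      ≤ ↑m * (Real.exp (-(c * gameValue A)) * Real.exp (-(c * δ))) := by
    calc (∑ j ∈ (BRset A xs)ᶜ, Real.exp (-(c * (∑ k, xs k * A k j))))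
        ≤ ∑ _j ∈ (BRset A xs)ᶜ, Real.exp (-(c * gameValue A)) * Real.exp (-(c * δ)) := by
          refine Finset.sum_le_sum fun j hj => ?_
          rw [← Real.exp_add]
          refine Real.exp_le_exp.mpr ?_
          have hgj := hgap j (Finset.mem_compl.mp hj)
          have := mul_le_mul_of_nonneg_left hgj hcpos.le
          linarith [this]
      _ = (((BRset A xs)ᶜ.card : ℝ)) * (Real.exp (-(c * gameValue A)) * Real.exp (-(c * δ))) := by
          rw [Finset.sum_const, nsmul_eq_mul]
      _ ≤ ↑m * (Real.exp (-(c * gameValue A)) * Real.exp (-(c * δ))) := by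
          refine mul_le_mul_of_nonneg_right ?_ (by positivity)
          have hcard : ((BRset A xs)ᶜ).card ≤ m := by
            simpa using Finset.card_le_univ ((BRset A xs)ᶜ)
          exact_mod_cast hcard
  have hstep : ↑m * Real.exp (-(c * δ)) ≤ Real.exp ε - 1 := by
    have h3 := mul_le_mul_of_nonneg_left hexpc (le_of_lt hmpos)
    rwa [mul_div_cancel₀ _ hmpos.ne'] at h3
  have hWle : W ≤ (((BRset A xs).card : ℝ) * Real.exp ε) * Real.exp (-(c * gameValue A)) := by
    have hE : 0 < Real.exp (-(c * gameValue A)) := Real.exp_pos _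
    have hK1' : (1:ℝ) ≤ ((BRset A xs).card : ℝ) := by exact_mod_cast hK1
    calc W = _ + _ := hsplit
      _ ≤ ((BRset A xs).card : ℝ) * Real.exp (-(c * gameValue A))
          + ↑m * (Real.exp (-(c * gameValue A)) * Real.exp (-(c * δ))) := by
          rw [h1]; exact add_le_add_right h2 _
      _ ≤ (((BRset A xs).card : ℝ) * Real.exp ε) * Real.exp (-(c * gameValue A)) := by
          have e1 : Real.exp (-(c * gameValue A)) * (↑m * Real.exp (-(c * δ)))
              ≤ Real.exp (-(c * gameValue A)) * (Real.exp ε - 1) :=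
            mul_le_mul_of_nonneg_left hstep hE.le
          have e2 : Real.exp (-(c * gameValue A)) * (Real.exp ε - 1)
              ≤ ((BRset A xs).card : ℝ) * (Real.exp (-(c * gameValue A)) * (Real.exp ε - 1)) :=
            le_mul_of_one_le_left (mul_nonneg hE.le (by linarith)) hK1'
          nlinarith [e1, e2]
  have hKpos : (0:ℝ) < ((BRset A xs).card : ℝ) := by exact_mod_cast hK1
  have hlogW : Real.log W ≤ Real.log ((BRset A xs).card : ℝ) + ε - c * gameValue A := by
    have h3 := Real.log_le_log hWpos hWle
    rw [Real.log_mul (by positivity) (Real.exp_ne_zero _),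
      Real.log_mul hKpos.ne' (Real.exp_ne_zero _), Real.log_exp, Real.log_exp] at h3
    linarith
  have hfinal : T * gameValue A + (Real.log ↑m - Real.log ((BRset A xs).card : ℝ) - ε) / η
      ≤ η⁻¹ * (Real.log ↑m - Real.log W) := by
    have h4 : Real.log ↑m - Real.log ((BRset A xs).card : ℝ) - ε + c * gameValue A
        ≤ Real.log ↑m - Real.log W := by linarith
    have h5 := mul_le_mul_of_nonneg_left h4 (inv_pos.mpr hη).le
    calc T * gameValue A + (Real.log ↑m - Real.log ((BRset A xs).card : ℝ) - ε) / η
        = η⁻¹ * (Real.log ↑m - Real.log ((BRset A xs).card : ℝ) - ε + c * gameValue A) := by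
          rw [hc]; field_simp; ring
      _ ≤ η⁻¹ * (Real.log ↑m - Real.log W) := h5
  rw [hkcard]
  calc T * gameValue A + (Real.log ↑m - Real.log ((BRset A xs).card : ℝ) - ε) / η
      ≤ η⁻¹ * (Real.log ↑m - Real.log W) := hfinal
    _ = Rcont η A (fun _ => 0) T (fun _ => xs) := hR.symm
    _ ≤ RcontStar η A (fun _ => 0) T := hle
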